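/- Let ℓ(θ,x,y) = (1/2)(θᵀxy - 1)² with θ, x ∈ ℝ^p, y ∈ {-1,1}. Let x̃ = x + w with w ~ N(0, σ²I_p), and ỹ the randomized response of y with keep-probability S(ε). Define the debiased estimator ℓ̃(θ, x̃, ỹ) = S̃(ε)·ℓ(θ,x̃,ỹ) + (1-S̃(ε))·ℓ(θ,x̃,-ỹ) - (σ²/2)‖θ‖², where S̃(ε) = 1/(1-e^{-ε}). Then E_{x̃,ỹ}[ℓ̃(θ, x̃, ỹ)] = ℓ(θ,x,y). -/

import Mathlib

open MeasureTheory ProbabilityTheory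

noncomputable def S (ε : ℝ) : ℝ := 1 / (1 + Real.exp (-ε))
noncomputable def Stilde (ε : ℝ) : ℝ := 1 / (1 - Real.exp (-ε))

/-- The isotropic Gaussian measure `N(0, v·I_p)` on `ℝ^p`. -/
noncomputable def gaussPi (p : ℕ) (v : ℝ) : Measure (EuclideanSpace ℝ (Fin p)) :=
  Measure.map (MeasurableEquiv.toLp 2 (Fin p → ℝ))
    (Measure.pi fun _ : Fin p => gaussianReal 0 v.toNNReal)

/-- The quadratic loss `ℓ(θ,x,y) = (1/2)(θᵀxy - 1)²`. -/
noncomputable def quadLoss (p : ℕ) (θ x : EuclideanSpace ℝ (Fin p)) (y : ℝ) : ℝ :=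
  (1 / 2) * ((inner ℝ θ x : ℝ) * y - 1) ^ 2

/-- The debiased IWP estimator of the quadratic loss:
`ℓ̃(θ, x̃, ỹ) = S̃(ε) ℓ(θ,x̃,ỹ) + (1-S̃(ε)) ℓ(θ,x̃,-ỹ) - (σ²/2)‖θ‖²`. -/
noncomputable def iwpQuad (p : ℕ) (σ ε : ℝ) (θ xt : EuclideanSpace ℝ (Fin p))
    (yt : ℝ) : ℝ :=
  Stilde ε * quadLoss p θ xt yt + (1 - Stilde ε) * quadLoss p θ xt (-yt)
    - σ ^ 2 / 2 * ‖θ‖ ^ 2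

open Real
open scoped NNReal ENNReal

lemma integral_odd_zero (f : ℝ → ℝ) (hf : ∀ x, f (-x) = - f x) : ∫ x, f x = 0 := by
  have A : MeasurableEmbedding fun x : ℝ => -x :=
    (Homeomorph.neg ℝ).isClosedEmbedding.measurableEmbedding
  have h1 : ∫ x, f (-x) = ∫ x, f x := by
    have := A.integral_map (μ := volume) f
    rw [Measure.map_neg_eq_self (volume : Measure ℝ)] at this
    exact this.symm
  have h2 : ∫ x, f (-x) = - ∫ x, f x := by
    simp_rw [hf]; exact integral_neg f
  linarith [h1.symm.trans h2]

variable {v : ℝ} {p : ℕ}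

lemma gauss_pdf_eq (hv : 0 < v) (x : ℝ) :
    gaussianPDFReal 0 v.toNNReal x = (Real.sqrt (2 * π * v))⁻¹ * Real.exp (-((2*v)⁻¹) * x ^ 2) := by
  rw [gaussianPDFReal]
  have : (v.toNNReal : ℝ) = v := Real.coe_toNNReal v hv.le
  rw [this]
  ring_nf

lemma gauss_integral_eq (hv : 0 < v) (g : ℝ → ℝ) :
    ∫ x, g x ∂(gaussianReal 0 v.toNNReal) = ∫ x, gaussianPDFReal 0 v.toNNReal x * g x := by
  have hv' : v.toNNReal ≠ 0 := by simp [Real.toNNReal_eq_zero]; linarith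
  rw [gaussianReal_of_var_ne_zero 0 hv']
  have hmeas : Measurable fun x => (gaussianPDFReal 0 v.toNNReal x).toNNReal :=
    (measurable_gaussianPDFReal 0 v.toNNReal).real_toNNReal
  have : (gaussianPDF 0 v.toNNReal) = fun x => ((gaussianPDFReal 0 v.toNNReal x).toNNReal : ℝ≥0∞) := by
    funext x; rw [gaussianPDF_def]; rfl
  rw [this, integral_withDensity_eq_integral_smul hmeas]
  congr 1; funext x
  simp [NNReal.smul_def, Real.coe_toNNReal _ (gaussianPDFReal_nonneg 0 v.toNNReal x)]

lemma gauss_integrable_iff (hv : 0 < v) (g : ℝ → ℝ) :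
    Integrable g (gaussianReal 0 v.toNNReal) ↔
      Integrable (fun x => gaussianPDFReal 0 v.toNNReal x * g x) := by
  have hv' : v.toNNReal ≠ 0 := by simp [Real.toNNReal_eq_zero]; linarith
  rw [gaussianReal_of_var_ne_zero 0 hv']
  have hmeas : Measurable fun x => (gaussianPDFReal 0 v.toNNReal x).toNNReal :=
    (measurable_gaussianPDFReal 0 v.toNNReal).real_toNNReal
  have : (gaussianPDF 0 v.toNNReal) = fun x => ((gaussianPDFReal 0 v.toNNReal x).toNNReal : ℝ≥0∞) := by
    funext x; rw [gaussianPDF_def]; rfl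
  rw [this, integrable_withDensity_iff_integrable_smul hmeas]
  constructor <;> intro h <;> refine h.congr (Filter.Eventually.of_forall fun x => ?_) <;>
    simp [NNReal.smul_def, Real.coe_toNNReal _ (gaussianPDFReal_nonneg 0 v.toNNReal x)]

lemma gauss_pdf_even (hv : 0 < v) (x : ℝ) :
    gaussianPDFReal 0 v.toNNReal (-x) = gaussianPDFReal 0 v.toNNReal x := by
  rw [gauss_pdf_eq hv, gauss_pdf_eq hv, neg_pow]; norm_num

lemma gauss_int_id (hv : 0 < v) :
    Integrable (fun x => x) (gaussianReal 0 v.toNNReal) ∧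
      ∫ x, x ∂(gaussianReal 0 v.toNNReal) = 0 := by
  have hb : 0 < (2*v)⁻¹ := by positivity
  constructor
  · rw [gauss_integrable_iff hv]
    refine ((integrable_mul_exp_neg_mul_sq hb).const_mul ((Real.sqrt (2 * π * v))⁻¹)).congr
      (Filter.Eventually.of_forall fun x => ?_)
    simp only [gauss_pdf_eq hv]; ring
  · rw [gauss_integral_eq hv]
    refine integral_odd_zero _ fun x => ?_
    rw [gauss_pdf_even hv]; ring

lemma gauss_int_sq (hv : 0 < v) :
    Integrable (fun x => x ^ 2) (gaussianReal 0 v.toNNReal) ∧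
      ∫ x, x ^ 2 ∂(gaussianReal 0 v.toNNReal) = v := by
  have hb : 0 < (2*v)⁻¹ := by positivity
  have hrpow : ∀ x : ℝ, x ^ ((2:ℕ):ℝ) = x ^ (2:ℕ) := fun x => Real.rpow_natCast x 2
  have h2 : Integrable (fun x : ℝ => x ^ (2:ℕ) * Real.exp (-(2*v)⁻¹ * x ^ 2)) := by
    have := integrable_rpow_mul_exp_neg_mul_sq hb (s := ((2:ℕ):ℝ)) (by norm_num)
    refine this.congr (Filter.Eventually.of_forall fun x => ?_)
    simp only [hrpow]
  constructor
  · rw [gauss_integrable_iff hv]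
    refine (h2.const_mul ((Real.sqrt (2 * π * v))⁻¹)).congr
      (Filter.Eventually.of_forall fun x => ?_)
    simp only [gauss_pdf_eq hv]; ring
  · rw [gauss_integral_eq hv]
    have h1 : ∫ x, gaussianPDFReal 0 v.toNNReal x * x ^ 2
        = (Real.sqrt (2 * π * v))⁻¹ * ∫ x : ℝ, x ^ 2 * Real.exp (-(2*v)⁻¹ * x ^ 2) := by
      rw [← integral_const_mul]
      refine integral_congr_ae (Filter.Eventually.of_forall fun x => ?_)
      simp only [gauss_pdf_eq hv]; ring
    have habs : ∫ x : ℝ, x ^ 2 * Real.exp (-(2*v)⁻¹ * x ^ 2)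
        = 2 * ∫ x in Set.Ioi (0:ℝ), x ^ 2 * Real.exp (-(2*v)⁻¹ * x ^ 2) := by
      rw [← integral_comp_abs (f := fun t : ℝ => t ^ 2 * Real.exp (-(2*v)⁻¹ * t ^ 2))]
      refine integral_congr_ae (Filter.Eventually.of_forall fun x => ?_)
      simp [sq_abs]
    have h3 : ∫ x in Set.Ioi (0:ℝ), x ^ 2 * Real.exp (-(2*v)⁻¹ * x ^ 2)
        = ((2*v)⁻¹) ^ (-(((2:ℝ)+1))/2) * (1/2) * Real.Gamma (((2:ℝ)+1)/2) := by
      rw [← integral_rpow_mul_exp_neg_mul_rpow (p := 2) (q := 2) (by norm_num) (by norm_num) hb]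
      have hc : ∀ x : ℝ, x ^ (2:ℝ) = x ^ (2:ℕ) := fun x => by
        rw [show (2:ℝ) = ((2:ℕ):ℝ) by norm_num, Real.rpow_natCast]
      refine setIntegral_congr_fun measurableSet_Ioi fun x _ => ?_
      rw [hc]
    have hG : Real.Gamma (((2:ℝ)+1)/2) = Real.sqrt π / 2 := by
      have h : ((2:ℝ)+1)/2 = 1/2 + 1 := by norm_num
      rw [h, Real.Gamma_add_one (by norm_num), Real.Gamma_one_half_eq]
      ring
    have ha : (0:ℝ) < 2*v := by positivity
    have hbpow : ((2*v)⁻¹) ^ (-(((2:ℝ)+1))/2) = (2*v) * Real.sqrt (2*v) := by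
      rw [Real.inv_rpow ha.le, ← Real.rpow_neg ha.le]
      rw [show (2*v) * Real.sqrt (2*v) = (2*v) ^ (1:ℝ) * (2*v) ^ ((1:ℝ)/2) by
        rw [Real.rpow_one, ← Real.sqrt_eq_rpow]]
      rw [← Real.rpow_add ha]
      norm_num
    have hsplit : Real.sqrt (2 * π * v) = Real.sqrt (2*v) * Real.sqrt π := by
      rw [show 2*π*v = (2*v)*π by ring, Real.sqrt_mul ha.le]
    rw [h1, habs, h3, hG, hbpow, hsplit]
    have hs : 0 < Real.sqrt (2*v) := Real.sqrt_pos.mpr ha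
    have ht : 0 < Real.sqrt π := Real.sqrt_pos.mpr Real.pi_pos
    field_simp

lemma pi_integrable_prod {v : ℝ} {p : ℕ} (f : Fin p → ℝ → ℝ)
    (hf : ∀ i, Integrable (f i) (gaussianReal 0 v.toNNReal)) :
    Integrable (fun w : EuclideanSpace ℝ (Fin p) => ∏ i, f i (w i)) (gaussPi p v) := by
  letI : MeasureSpace ℝ := ⟨gaussianReal 0 v.toNNReal⟩
  haveI : SigmaFinite (volume : Measure ℝ) :=
    inferInstanceAs (SigmaFinite (gaussianReal 0 v.toNNReal))
  rw [gaussPi, (MeasurableEquiv.toLp 2 (Fin p → ℝ)).measurableEmbedding.integrable_map_iff]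
  exact Integrable.fintype_prod (E := ℝ) hf

lemma pi_integral_prod {v : ℝ} {p : ℕ} (f : Fin p → ℝ → ℝ) :
    ∫ w, ∏ i, f i (w i) ∂(gaussPi p v) = ∏ i, ∫ t, f i t ∂(gaussianReal 0 v.toNNReal) := by
  letI : MeasureSpace ℝ := ⟨gaussianReal 0 v.toNNReal⟩
  haveI : SigmaFinite (volume : Measure ℝ) :=
    inferInstanceAs (SigmaFinite (gaussianReal 0 v.toNNReal))
  rw [gaussPi, (MeasurableEquiv.toLp 2 (Fin p → ℝ)).measurableEmbedding.integral_map]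
  exact integral_fintype_prod_eq_prod f

lemma int_coord (hv : 0 < v) (i : Fin p) :
    Integrable (fun w : EuclideanSpace ℝ (Fin p) => w i) (gaussPi p v) ∧
      ∫ w, w i ∂(gaussPi p v) = 0 := by
  set f : Fin p → ℝ → ℝ := fun k t => if k = i then t else 1 with hf
  have hprod : ∀ w : EuclideanSpace ℝ (Fin p), ∏ k, f k (w k) = w i := by
    intro w; simp [hf]
  have hint : ∀ k, Integrable (f k) (gaussianReal 0 v.toNNReal) := by
    intro k
    by_cases h : k = i
    · simpa [hf, h] using (gauss_int_id hv).1
    · simpa [hf, h] using (integrable_const (1:ℝ) (μ := gaussianReal 0 v.toNNReal))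
  constructor
  · exact (pi_integrable_prod f hint).congr (Filter.Eventually.of_forall fun w => hprod w)
  · rw [← integral_congr_ae (Filter.Eventually.of_forall fun w => hprod w),
      pi_integral_prod (v := v) f]
    refine Finset.prod_eq_zero (Finset.mem_univ i) ?_
    simp only [hf, if_pos rfl]
    exact (gauss_int_id hv).2

lemma int_coord2 (hv : 0 < v) (i j : Fin p) :
    Integrable (fun w : EuclideanSpace ℝ (Fin p) => w i * w j) (gaussPi p v) ∧
      ∫ w, w i * w j ∂(gaussPi p v) = if i = j then v else 0 := by
  set f : Fin p → ℝ → ℝ :=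
    fun k t => (if k = i then t else 1) * (if k = j then t else 1) with hf
  have hprod : ∀ w : EuclideanSpace ℝ (Fin p), ∏ k, f k (w k) = w i * w j := by
    intro w; rw [hf]; rw [Finset.prod_mul_distrib]; simp
  have hint : ∀ k, Integrable (f k) (gaussianReal 0 v.toNNReal) := by
    intro k
    by_cases h1 : k = i <;> by_cases h2 : k = j
    · subst h1; subst h2; simpa [hf, sq] using (gauss_int_sq hv).1
    · subst h1; simpa [hf, h2] using (gauss_int_id hv).1
    · subst h2; simpa [hf, h1] using (gauss_int_id hv).1
    · simpa [hf, h1, h2] using (integrable_const (1:ℝ) (μ := gaussianReal 0 v.toNNReal))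
  constructor
  · exact (pi_integrable_prod f hint).congr (Filter.Eventually.of_forall fun w => hprod w)
  · have := pi_integral_prod (v := v) f
    rw [← integral_congr_ae (Filter.Eventually.of_forall fun w => hprod w), this]
    by_cases hij : i = j
    · subst hij
      have : ∀ k, ∫ t, f k t ∂(gaussianReal 0 v.toNNReal) = if k = i then v else 1 := by
        intro k
        by_cases h : k = i
        · subst h
          rw [if_pos rfl]
          have : ∀ t : ℝ, f k t = t ^ 2 := by intro t; simp [hf, sq]
          simp_rw [this]
          exact (gauss_int_sq hv).2
        · simp [hf, h]
      simp_rw [this]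
      simp [Finset.prod_ite_eq']
    · have hzero : ∫ t, f i t ∂(gaussianReal 0 v.toNNReal) = 0 := by
        simp only [hf, if_pos rfl, if_neg hij]
        simpa using (gauss_int_id hv).2
      rw [Finset.prod_eq_zero (Finset.mem_univ i) hzero, if_neg hij]

instance (p : ℕ) (v : ℝ) : IsProbabilityMeasure (gaussPi p v) :=
  Measure.isProbabilityMeasure_map (MeasurableEquiv.toLp 2 (Fin p → ℝ)).measurable.aemeasurable

lemma inner_coord_sum (θ w : EuclideanSpace ℝ (Fin p)) :
    (inner ℝ θ w : ℝ) = ∑ i, θ i * w i := by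
  simp [PiLp.inner_apply, RCLike.inner_apply, conj_trivial]
  exact Finset.sum_congr rfl fun i _ => mul_comm _ _

lemma quad_shift {σ : ℝ} (hσ : 0 < σ) (θ x : EuclideanSpace ℝ (Fin p)) (y : ℝ)
    (hy : y ^ 2 = 1) :
    Integrable (fun w => quadLoss p θ (x + w) y) (gaussPi p (σ ^ 2)) ∧
      ∫ w, quadLoss p θ (x + w) y ∂(gaussPi p (σ ^ 2))
        = quadLoss p θ x y + σ ^ 2 / 2 * ‖θ‖ ^ 2 := by
  have hv : 0 < σ ^ 2 := by positivity
  set c : ℝ := (inner ℝ θ x : ℝ) * y - 1 with hc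
  have hexpand : ∀ w : EuclideanSpace ℝ (Fin p), quadLoss p θ (x + w) y
      = 1/2 * c ^ 2 + (c * y) * (∑ i, θ i * w i) + 1/2 * (∑ i, θ i * w i) ^ 2 := by
    intro w
    rw [quadLoss, inner_add_right, inner_coord_sum θ w, hc]
    linear_combination ((∑ i, θ i * w i) ^ 2 / 2) * hy
  have hsq : ∀ w : EuclideanSpace ℝ (Fin p),
      (∑ i, θ i * w i) ^ 2 = ∑ i, ∑ j, (θ i * θ j) * (w i * w j) := by
    intro w
    rw [sq, Finset.sum_mul_sum]
    exact Finset.sum_congr rfl fun i _ => Finset.sum_congr rfl fun j _ => by ring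
  have hT_int : Integrable (fun w : EuclideanSpace ℝ (Fin p) => ∑ i, θ i * w i)
      (gaussPi p (σ ^ 2)) :=
    integrable_finset_sum _ fun i _ => ((int_coord hv i).1.const_mul (θ i))
  have hT2_int : Integrable (fun w : EuclideanSpace ℝ (Fin p) => (∑ i, θ i * w i) ^ 2)
      (gaussPi p (σ ^ 2)) := by
    refine (integrable_finset_sum _ fun i _ => integrable_finset_sum _ fun j _ =>
      ((int_coord2 hv i j).1.const_mul (θ i * θ j))).congr
      (Filter.Eventually.of_forall fun w => (hsq w).symm)
  have hint : Integrable (fun w => quadLoss p θ (x + w) y) (gaussPi p (σ ^ 2)) := by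
    refine Integrable.congr ?_ (Filter.Eventually.of_forall fun w => (hexpand w).symm)
    exact ((integrable_const _).add (hT_int.const_mul (c * y))).add (hT2_int.const_mul (1/2))
  refine ⟨hint, ?_⟩
  rw [integral_congr_ae (Filter.Eventually.of_forall fun w => hexpand w)]
  have hnorm : ∑ i, θ i * θ i = ‖θ‖ ^ 2 := by
    rw [← real_inner_self_eq_norm_sq, inner_coord_sum]
  have hTval : ∫ w, (∑ i, θ i * w i) ∂(gaussPi p (σ ^ 2)) = 0 := by
    rw [integral_finset_sum _ fun i _ => ((int_coord hv i).1.const_mul (θ i))]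
    refine Finset.sum_eq_zero fun i _ => ?_
    rw [integral_const_mul, (int_coord hv i).2, mul_zero]
  have hT2val : ∫ w, (∑ i, θ i * w i) ^ 2 ∂(gaussPi p (σ ^ 2)) = σ ^ 2 * ‖θ‖ ^ 2 := by
    rw [integral_congr_ae (Filter.Eventually.of_forall fun w => hsq w),
      integral_finset_sum _ fun i _ => integrable_finset_sum _ fun j _ =>
        ((int_coord2 hv i j).1.const_mul (θ i * θ j))]
    have : ∀ i : Fin p, ∫ w, ∑ j, (θ i * θ j) * (w i * w j) ∂(gaussPi p (σ ^ 2))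
        = θ i * θ i * σ ^ 2 := by
      intro i
      rw [integral_finset_sum _ fun j _ => ((int_coord2 hv i j).1.const_mul (θ i * θ j))]
      have : ∀ j : Fin p, ∫ w, (θ i * θ j) * (w i * w j) ∂(gaussPi p (σ ^ 2))
          = if i = j then θ i * θ i * σ ^ 2 else 0 := by
        intro j
        rw [integral_const_mul, (int_coord2 hv i j).2]
        by_cases h : i = j
        · subst h; simp [mul_comm]
        · simp [h]
      simp_rw [this]
      simp
    simp_rw [this]
    rw [← Finset.sum_mul, hnorm]
    ring
  have hint1 : Integrable (fun w : EuclideanSpace ℝ (Fin p) =>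
      1/2 * c ^ 2 + c * y * ∑ i, θ i * w i) (gaussPi p (σ ^ 2)) := by
    exact (integrable_const _).add (hT_int.const_mul (c * y))
  have hint0 : Integrable (fun _ : EuclideanSpace ℝ (Fin p) => 1/2 * c ^ 2)
      (gaussPi p (σ ^ 2)) := integrable_const _
  rw [integral_add hint1 (hT2_int.const_mul (1/2)),
    integral_add hint0 (hT_int.const_mul (c * y)),
    integral_const, integral_const_mul, integral_const_mul, hTval, hT2val]
  simp [quadLoss, hc]
  ring

/-- the debiased quadratic-loss estimator is unbiased: taking the
expectation over `x̃ = x + w`, `w ~ N(0, σ²I_p)`, and the independent randomized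
response `ỹ` of `y` with keep-probability `S(ε)`, `E[ℓ̃(θ, x̃, ỹ)] = ℓ(θ,x,y)`. -/
theorem iwp_quad_unbiased (p : ℕ) (σ ε : ℝ) (hσ : 0 < σ) (hε : 0 < ε)
    (θ x : EuclideanSpace ℝ (Fin p)) (y : ℝ) (hy : y = 1 ∨ y = -1) :
    S ε * (∫ w, iwpQuad p σ ε θ (x + w) y ∂(gaussPi p (σ ^ 2)))
      + (1 - S ε) * (∫ w, iwpQuad p σ ε θ (x + w) (-y) ∂(gaussPi p (σ ^ 2)))
      = quadLoss p θ x y := by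
  have hy2 : y ^ 2 = 1 := by rcases hy with h | h <;> rw [h] <;> norm_num
  have hny2 : (-y) ^ 2 = 1 := by rw [neg_pow]; simpa using hy2
  obtain ⟨i1, e1⟩ := quad_shift hσ θ x y hy2
  obtain ⟨i2, e2⟩ := quad_shift hσ θ x (-y) hny2
  set s : ℝ := σ ^ 2 / 2 * ‖θ‖ ^ 2 with hs
  set Ly : ℝ := quadLoss p θ x y with hLy
  set Lny : ℝ := quadLoss p θ x (-y) with hLny
  have hA : ∫ w, iwpQuad p σ ε θ (x + w) y ∂(gaussPi p (σ ^ 2))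
      = Stilde ε * Ly + (1 - Stilde ε) * Lny := by
    simp only [iwpQuad]
    have h1 : Integrable (fun w : EuclideanSpace ℝ (Fin p) =>
        Stilde ε * quadLoss p θ (x + w) y
          + (1 - Stilde ε) * quadLoss p θ (x + w) (-y)) (gaussPi p (σ ^ 2)) := by
      exact (i1.const_mul _).add (i2.const_mul _)
    have h2 : Integrable (fun w : EuclideanSpace ℝ (Fin p) =>
        Stilde ε * quadLoss p θ (x + w) y) (gaussPi p (σ ^ 2)) := i1.const_mul _
    have h3 : Integrable (fun w : EuclideanSpace ℝ (Fin p) =>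
        (1 - Stilde ε) * quadLoss p θ (x + w) (-y)) (gaussPi p (σ ^ 2)) := i2.const_mul _
    rw [integral_sub h1 (integrable_const s), integral_add h2 h3, integral_const_mul,
      integral_const_mul, integral_const, e1, e2]
    simp
    ring
  have hB : ∫ w, iwpQuad p σ ε θ (x + w) (-y) ∂(gaussPi p (σ ^ 2))
      = Stilde ε * Lny + (1 - Stilde ε) * Ly := by
    simp only [iwpQuad, neg_neg]
    have h1 : Integrable (fun w : EuclideanSpace ℝ (Fin p) =>
        Stilde ε * quadLoss p θ (x + w) (-y)
          + (1 - Stilde ε) * quadLoss p θ (x + w) y) (gaussPi p (σ ^ 2)) := by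
      exact (i2.const_mul _).add (i1.const_mul _)
    have h2 : Integrable (fun w : EuclideanSpace ℝ (Fin p) =>
        Stilde ε * quadLoss p θ (x + w) (-y)) (gaussPi p (σ ^ 2)) := i2.const_mul _
    have h3 : Integrable (fun w : EuclideanSpace ℝ (Fin p) =>
        (1 - Stilde ε) * quadLoss p θ (x + w) y) (gaussPi p (σ ^ 2)) := i1.const_mul _
    rw [integral_sub h1 (integrable_const s), integral_add h2 h3, integral_const_mul,
      integral_const_mul, integral_const, e1, e2]
    simp
    ring
  rw [hA, hB, S, Stilde]
  have ha0 : 0 < Real.exp (-ε) := Real.exp_pos _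
  have ha1 : Real.exp (-ε) < 1 := by
    rw [Real.exp_lt_one_iff]; linarith
  have h1 : (1:ℝ) + Real.exp (-ε) ≠ 0 := by linarith
  have h2 : (1:ℝ) - Real.exp (-ε) ≠ 0 := by linarith
  field_simp
  ring
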